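/- arXiv:2404.03774 — 2 statements merged into one kernel-verified Lean document; each statement's English description precedes it below -/
import Mathlib

section
/- Fix k ∈ ℕ and a function q : 𝔽₂^k → [1/2 - 2^{-(k+3)}, 1/2 + 2^{-(k+3)}]. Then there exists a probability distribution μ on 𝔽₂^{k+1} such that for all z ∈ 𝔽₂^k: P_{F ~ μ}[F₀ + z₁F₁ + ⋯ + z_kF_k ≡ 1 (mod 2)] = q(z). That is, every near-uniform function on 𝔽₂^k can be realized exactly as the success probability of a random affine form evaluated at z. -/
noncomputable def sgn2 (x : ZMod 2) : ℝ := if x = 0 then 1 else -1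

lemma zmod2_cases' : ∀ x : ZMod 2, x = 0 ∨ x = 1 := by decide
lemma zmod2_cases (x : ZMod 2) : x = 0 ∨ x = 1 := zmod2_cases' x
lemma two_eq_zero' : (2 : ZMod 2) = 0 := by decide

lemma zmod2_self_add (x : ZMod 2) : x + x = 0 := by
  rcases zmod2_cases x with h | h <;> rw [h] <;> decide

lemma sgn2_add (a b : ZMod 2) : sgn2 (a + b) = sgn2 a * sgn2 b := by
  have h11 : (1:ZMod 2) + 1 = 0 := by decide
  have h1 : (1:ZMod 2) ≠ 0 := by decide
  rcases zmod2_cases a with h | h <;> rcases zmod2_cases b with h' | h' <;>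
    subst h <;> subst h' <;> simp [sgn2, h11, h1] <;> norm_num

lemma sgn2_zero : sgn2 0 = 1 := by norm_num [sgn2]

lemma abs_sgn2 (x : ZMod 2) : |sgn2 x| = 1 := by
  rcases zmod2_cases x with h | h <;> subst h <;>
    norm_num [sgn2, show ((1:ZMod 2) ≠ 0) from by decide]

lemma univ_zmod2 : (Finset.univ : Finset (ZMod 2)) = {0, 1} := by decide

lemma sum_sgn2_add (c : ZMod 2) : ∑ x : ZMod 2, sgn2 (x + c) = 0 := by
  have h11 : (1:ZMod 2) + 1 = 0 := by decide
  have h1 : (1:ZMod 2) ≠ 0 := by decide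
  rw [univ_zmod2, Finset.sum_pair (by decide : (0:ZMod 2) ≠ 1)]
  rcases zmod2_cases c with h | h <;> subst h <;> simp [sgn2, h11, h1] <;> norm_num

lemma sum_sgn2_mul (c : ZMod 2) : ∑ x : ZMod 2, sgn2 (c * x) = if c = 0 then 2 else 0 := by
  have h1 : (1:ZMod 2) ≠ 0 := by decide
  rw [univ_zmod2, Finset.sum_pair (by decide : (0:ZMod 2) ≠ 1)]
  rcases zmod2_cases c with h | h <;> subst h <;> simp [sgn2, h1] <;> norm_num

lemma sgn2_sum {ι : Type*} (s : Finset ι) (f : ι → ZMod 2) :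
    sgn2 (∑ i ∈ s, f i) = ∏ i ∈ s, sgn2 (f i) := by
  classical
  induction s using Finset.induction with
  | empty => simp [sgn2_zero]
  | insert _ _ h ih => rw [Finset.sum_insert h, Finset.prod_insert h, sgn2_add, ih]

lemma orth (k : ℕ) (z : Fin k → ZMod 2) :
    ∑ G : Fin k → ZMod 2, sgn2 (∑ i, z i * G i) = if z = 0 then 2 ^ k else 0 := by
  classical
  have h1 : ∑ G : Fin k → ZMod 2, sgn2 (∑ i, z i * G i)
      = ∏ i : Fin k, ∑ x : ZMod 2, sgn2 (z i * x) := by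
    rw [Finset.prod_univ_sum, Fintype.piFinset_univ]
    exact Finset.sum_congr rfl fun G _ => sgn2_sum _ _
  rw [h1, Finset.prod_congr rfl fun i _ => sum_sgn2_mul (z i)]
  by_cases hz : z = 0
  · subst hz
    rw [if_pos rfl]
    simp
  · rw [if_neg hz]
    obtain ⟨i, hi⟩ : ∃ i, z i ≠ 0 := by
      by_contra h; push_neg at h; exact hz (funext h)
    exact Finset.prod_eq_zero (Finset.mem_univ i) (by rw [if_neg hi])

/-- Fix `k ∈ ℕ` and a function `q : 𝔽₂^k → [1/2 - 2^{-(k+3)}, 1/2 + 2^{-(k+3)}]`.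
Then there exists a probability distribution `μ` on `𝔽₂^{k+1}` such that for all `z ∈ 𝔽₂^k`,
`P_{F ~ μ}[F₀ + z₁F₁ + ⋯ + z_kF_k ≡ 1 (mod 2)] = q(z)`. -/
theorem affine_form_realization (k : ℕ) (q : (Fin k → ZMod 2) → ℝ)
    (hq : ∀ z, q z ∈ Set.Icc (1 / 2 - (1 / 2 : ℝ) ^ (k + 3)) (1 / 2 + (1 / 2 : ℝ) ^ (k + 3))) :
    ∃ μ : (Fin (k + 1) → ZMod 2) → ℝ,
      (∀ F, 0 ≤ μ F) ∧ (∑ F, μ F = 1) ∧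
        ∀ z : Fin k → ZMod 2,
          (∑ F : Fin (k + 1) → ZMod 2,
              if F 0 + ∑ i : Fin k, z i * F i.succ = 1 then μ F else 0) = q z := by
  classical
  set ε : (Fin k → ZMod 2) → ℝ := fun z => 1 - 2 * q z with hε
  have hεbd : ∀ z, |ε z| ≤ (1/2 : ℝ) ^ (k + 2) := by
    intro z
    have h := hq z
    rw [Set.mem_Icc] at h
    have h2 : (1/2:ℝ)^(k+2) = 2 * (1/2)^(k+3) := by ring
    rw [abs_le, h2]
    constructor <;> [skip; skip] <;> simp only [hε] <;> nlinarith [h.1, h.2]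
  set μ : (Fin (k + 1) → ZMod 2) → ℝ :=
    fun F => (1/2) ^ (k+1) * (1 + ∑ z', ε z' * sgn2 (F 0 + ∑ i, z' i * F i.succ)) with hμ
  have hcard : Fintype.card (Fin (k+1) → ZMod 2) = 2 ^ (k+1) := by
    rw [Fintype.card_fun, ZMod.card, Fintype.card_fin]
  have key0 : ∀ z : Fin k → ZMod 2,
      ∑ F : Fin (k + 1) → ZMod 2, sgn2 (F 0 + ∑ i, z i * F i.succ) = 0 := by
    intro z
    rw [← Equiv.sum_comp (Fin.consEquiv (fun _ : Fin (k+1) => ZMod 2))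
      (fun F => sgn2 (F 0 + ∑ i, z i * F i.succ))]
    rw [Fintype.sum_prod_type]
    simp only [Fin.consEquiv_apply, Fin.cons_zero, Fin.cons_succ]
    rw [Finset.sum_comm]
    exact Finset.sum_eq_zero fun G _ => sum_sgn2_add _
  have key2 : ∀ z z' : Fin k → ZMod 2,
      ∑ F : Fin (k + 1) → ZMod 2,
        sgn2 (F 0 + ∑ i, z' i * F i.succ) * sgn2 (F 0 + ∑ i, z i * F i.succ)
        = if z' = z then 2 ^ (k+1) else 0 := by
    intro z z'
    have hs : ∀ F : Fin (k+1) → ZMod 2,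
        sgn2 (F 0 + ∑ i, z' i * F i.succ) * sgn2 (F 0 + ∑ i, z i * F i.succ)
        = sgn2 (∑ i, (z' i + z i) * F i.succ) := by
      intro F
      rw [← sgn2_add]
      congr 1
      calc (F 0 + ∑ i, z' i * F i.succ) + (F 0 + ∑ i, z i * F i.succ)
          = (F 0 + F 0) + ∑ i, (z' i * F i.succ + z i * F i.succ) := by
            rw [Finset.sum_add_distrib]; ring
        _ = ∑ i, (z' i + z i) * F i.succ := by
            rw [zmod2_self_add, zero_add]
            exact Finset.sum_congr rfl fun i _ => by ring
    rw [Finset.sum_congr rfl fun F _ => hs F]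
    rw [← Equiv.sum_comp (Fin.consEquiv (fun _ : Fin (k+1) => ZMod 2))
      (fun F => sgn2 (∑ i, (z' i + z i) * F i.succ))]
    rw [Fintype.sum_prod_type]
    simp only [Fin.consEquiv_apply, Fin.cons_zero, Fin.cons_succ]
    rw [Finset.sum_congr rfl fun x _ => orth k (fun i => z' i + z i)]
    have hzz : ((fun i => z' i + z i) = 0) ↔ (z' = z) := by
      constructor
      · intro h; funext i
        have hi := congrFun h i
        rw [Pi.zero_apply] at hi
        rcases zmod2_cases (z' i) with h1 | h1 <;> rcases zmod2_cases (z i) with h2 | h2 <;>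
          rw [h1, h2] <;> rw [h1, h2] at hi <;> first | rfl | exact absurd hi (by decide)
      · intro h; subst h; funext i
        rw [Pi.zero_apply, zmod2_self_add]
    rw [Finset.sum_const, Finset.card_univ, ZMod.card]
    by_cases h : z' = z
    · rw [if_pos (hzz.mpr h), if_pos h, nsmul_eq_mul]
      push_cast
      ring
    · rw [if_neg (fun hc => h (hzz.mp hc)), if_neg h, smul_zero]
  have hsum : ∑ F, μ F = 1 := by
    have h1 : ∑ F, μ F
        = (1/2:ℝ)^(k+1) * ∑ F : Fin (k+1) → ZMod 2,
            (1 + ∑ z', ε z' * sgn2 (F 0 + ∑ i, z' i * F i.succ)) := by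
      rw [Finset.mul_sum]
    rw [h1, Finset.sum_add_distrib, Finset.sum_const, Finset.sum_comm]
    have h2 : ∑ z' : Fin k → ZMod 2,
        ∑ F : Fin (k+1) → ZMod 2, ε z' * sgn2 (F 0 + ∑ i, z' i * F i.succ) = 0 :=
      Finset.sum_eq_zero fun z' _ => by rw [← Finset.mul_sum, key0, mul_zero]
    rw [h2, add_zero, Finset.card_univ, hcard, nsmul_eq_mul, mul_one]
    rw [div_pow, one_pow, one_div]
    push_cast
    rw [inv_mul_cancel₀ (by positivity)]
  have hbd : ∀ F : Fin (k+1) → ZMod 2,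
      |∑ z', ε z' * sgn2 (F 0 + ∑ i, z' i * F i.succ)| ≤ (1/4 : ℝ) := by
    intro F
    calc |∑ z', ε z' * sgn2 (F 0 + ∑ i, z' i * F i.succ)|
        ≤ ∑ z', |ε z' * sgn2 (F 0 + ∑ i, z' i * F i.succ)| := Finset.abs_sum_le_sum_abs _ _
      _ ≤ ∑ _z' : Fin k → ZMod 2, (1/2 : ℝ) ^ (k+2) := by
          refine Finset.sum_le_sum fun z' _ => ?_
          rw [abs_mul, abs_sgn2, mul_one]
          exact hεbd z'
      _ = (2:ℝ)^k * (1/2)^(k+2) := by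
          rw [Finset.sum_const, Finset.card_univ, Fintype.card_fun, ZMod.card,
            Fintype.card_fin, nsmul_eq_mul]
          push_cast; ring
      _ = 1/4 := by
          rw [pow_add, ← mul_assoc, ← mul_pow]
          norm_num
  refine ⟨μ, ?_, hsum, ?_⟩
  · intro F
    have h1 := (abs_le.mp (hbd F)).1
    have h2 : (0:ℝ) < (1/2)^(k+1) := by positivity
    simp only [hμ]
    nlinarith
  · intro z
    have hind : ∀ F : Fin (k+1) → ZMod 2,
        (if F 0 + ∑ i : Fin k, z i * F i.succ = 1 then μ F else 0)
        = μ F * (1 - sgn2 (F 0 + ∑ i, z i * F i.succ)) / 2 := by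
      intro F
      rcases zmod2_cases (F 0 + ∑ i : Fin k, z i * F i.succ) with h | h <;> rw [h]
      · rw [if_neg (by decide), sgn2_zero]; ring
      · rw [if_pos rfl]
        rw [show sgn2 1 = -1 from by norm_num [sgn2, show ((1:ZMod 2) ≠ 0) from by decide]]
        ring
    rw [Finset.sum_congr rfl fun F _ => hind F]
    have expand : ∑ F : Fin (k+1) → ZMod 2, μ F * sgn2 (F 0 + ∑ i, z i * F i.succ) = ε z := by
      have hterm : ∀ F : Fin (k+1) → ZMod 2,
          μ F * sgn2 (F 0 + ∑ i, z i * F i.succ)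
          = (1/2:ℝ)^(k+1) * (sgn2 (F 0 + ∑ i, z i * F i.succ)
            + ∑ z', ε z' * (sgn2 (F 0 + ∑ i, z' i * F i.succ)
              * sgn2 (F 0 + ∑ i, z i * F i.succ))) := by
        intro F
        simp only [hμ]
        simp only [mul_assoc, add_mul, one_mul, Finset.sum_mul]
      rw [Finset.sum_congr rfl fun F _ => hterm F, ← Finset.mul_sum,
        Finset.sum_add_distrib, key0 z, zero_add, Finset.sum_comm]
      have h3 : ∑ z' : Fin k → ZMod 2, ∑ F : Fin (k+1) → ZMod 2,
          ε z' * (sgn2 (F 0 + ∑ i, z' i * F i.succ) * sgn2 (F 0 + ∑ i, z i * F i.succ))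
          = ε z * 2^(k+1) := by
        rw [Finset.sum_congr rfl fun z' _ => by rw [← Finset.mul_sum, key2 z z']]
        simp only [mul_ite, mul_zero]
        rw [Finset.sum_ite_eq' Finset.univ z (fun z' => ε z' * 2^(k+1))]
        simp
      have hpow : ((1:ℝ)/2)^(k+1) * 2^(k+1) = 1 := by
        rw [← mul_pow]; norm_num
      rw [h3, mul_comm (ε z), ← mul_assoc, hpow, one_mul]
    have hsplit : ∑ F : Fin (k+1) → ZMod 2,
        μ F * (1 - sgn2 (F 0 + ∑ i, z i * F i.succ)) / 2
        = ((∑ F, μ F) - ∑ F : Fin (k+1) → ZMod 2,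
            μ F * sgn2 (F 0 + ∑ i, z i * F i.succ)) / 2 := by
      rw [← Finset.sum_div, ← Finset.sum_sub_distrib]
      congr 1
      exact Finset.sum_congr rfl fun F _ => by ring
    rw [hsplit, hsum, expand, hε]
    ring
end

section
/- Let β be a probability distribution over states S[h] = {h} × {0,...,h-1} × 𝔽₂ and let f, with values in [0,1], be defined on S[h]. Define α := Σ_s β(s)f(s) and the joint distribution μ_{β,f} on 𝔽₂^{h+1} by drawing s = (h,k,b_h) ~ β, then B ∈ 𝔽₂^h uniform conditioned on Σ_{i<h} 1[B_i=1] = k and B_h = b_h, then F ~ Ber(f(s)). Suppose for ε > 0 that for all 1 ≤ m < h, |P_{μ_{β,f}}[B₁+⋯+B_m+F ≡ 0 mod 2] - 1/2| ≤ ε and similarly under μ_{β,α} (constant label α), and for all 0 ≤ m < h, |P_{μ_{β,f}}[B₁+⋯+B_m+B_h+F ≡ 0 mod 2] - 1/2| ≤ ε and similarly under μ_{β,α}. Then Σ_{s∈S[h]} β(s)|f(s) - α| ≤ C(h)·ε where C(h) = 4√2·(2h)^{3(h+1)²}. -/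
/-- The pmf of `Ber(p)` on `𝔽₂`. -/
noncomputable def berZ (p : ℝ) (x : ZMod 2) : ℝ := if x = 1 then p else 1 - p

/-- The Hamming weight of the first `h - 1` coordinates of `B ∈ 𝔽₂^h`. -/
def prefixWeight (h : ℕ) (B : Fin h → ZMod 2) : ℕ :=
  (Finset.univ.filter (fun i : Fin h => (i : ℕ) < h - 1 ∧ B i = 1)).card

/-- The last coordinate `B_h` of `B ∈ 𝔽₂^h` (junk `0` if `h = 0`). -/
def lastCoord (h : ℕ) (B : Fin h → ZMod 2) : ZMod 2 :=
  if hh : h - 1 < h then B ⟨h - 1, hh⟩ else 0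

/-- The pmf of `μ_{β,f} = Σ_s β(s) · (ν_s × Ber(f(s)))` on `𝔽₂^h × 𝔽₂`, where for a state
`s = (k, b_h)`, `ν_s` is the uniform distribution on vectors `B ∈ 𝔽₂^h` with Hamming
weight `k` among the first `h-1` coordinates and `B_h = b_h`. -/
noncomputable def muDensity (h : ℕ) (β f : ℕ × ZMod 2 → ℝ)
    (B : Fin h → ZMod 2) (F : ZMod 2) : ℝ :=
  β (prefixWeight h B, lastCoord h B) / ((h - 1).choose (prefixWeight h B) : ℝ) *
    berZ (f (prefixWeight h B, lastCoord h B)) F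

/-- `P_{(B,F) ~ μ_{β,f}}[B₁ + ⋯ + B_m + r·B_h + F ≡ 0 (mod 2)]`. -/
noncomputable def parityProb (h : ℕ) (β f : ℕ × ZMod 2 → ℝ) (m : ℕ) (r : ZMod 2) : ℝ :=
  ∑ B : Fin h → ZMod 2, ∑ F : ZMod 2,
    muDensity h β f B F *
      (if (∑ i : Fin h, if (i : ℕ) < m then B i else 0) + r * lastCoord h B + F = 0
        then 1 else 0)

lemma zmod2_add_eq_zero (x y : ZMod 2) : x + y = 0 ↔ x = y := by revert x y; decide

noncomputable def chi (x : ZMod 2) : ℝ := if x = 1 then -1 else 1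

@[simp] lemma chi_zero : chi 0 = 1 := by simp [chi]
@[simp] lemma chi_one : chi 1 = -1 := by norm_num [chi]

lemma chi_add (x y : ZMod 2) : chi (x + y) = chi x * chi y := by
  rcases zmod2_cases x with rfl | rfl <;> rcases zmod2_cases y with rfl | rfl <;>
    simp [chi, show (1 + 1 : ZMod 2) = 0 by decide]

lemma sum_zmod2 (F : ZMod 2 → ℝ) : ∑ x : ZMod 2, F x = F 0 + F 1 := by
  have huniv : (Finset.univ : Finset (ZMod 2)) = {0, 1} := by decide
  rw [huniv, Finset.sum_insert (by decide), Finset.sum_singleton]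

lemma chi_sum {ι : Type*} (s : Finset ι) (g : ι → ZMod 2) :
    chi (∑ i ∈ s, g i) = ∏ i ∈ s, chi (g i) := by
  classical
  induction s using Finset.cons_induction with
  | empty => simp
  | cons a s ha ih => rw [Finset.sum_cons, Finset.prod_cons, chi_add, ih]

def dotZ {h : ℕ} (z B : Fin h → ZMod 2) : ZMod 2 := ∑ i, z i * B i

lemma dotZ_add {h : ℕ} (z B B' : Fin h → ZMod 2) :
    dotZ z B + dotZ z B' = dotZ z (B + B') := by
  simp [dotZ, mul_add, Finset.sum_add_distrib]

lemma sum_chi_dot {h : ℕ} (w : Fin h → ZMod 2) :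
    ∑ z : Fin h → ZMod 2, chi (dotZ z w) = if w = 0 then (2 : ℝ) ^ h else 0 := by
  classical
  calc ∑ z : Fin h → ZMod 2, chi (dotZ z w)
      = ∑ z ∈ Fintype.piFinset (fun _ : Fin h => (Finset.univ : Finset (ZMod 2))),
          ∏ i, chi (z i * w i) := by
        rw [Fintype.piFinset_univ]
        exact Finset.sum_congr rfl fun z _ => chi_sum _ _
    _ = ∏ i : Fin h, ∑ c : ZMod 2, chi (c * w i) :=
        Finset.sum_prod_piFinset Finset.univ (fun i c => chi (c * w i))
    _ = ∏ i : Fin h, (1 + chi (w i)) := by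
        refine Finset.prod_congr rfl fun i _ => ?_
        rw [sum_zmod2]; simp
    _ = if w = 0 then (2 : ℝ) ^ h else 0 := by
        by_cases hw : w = 0
        · subst hw
          simp [Finset.prod_const]
          norm_num
        · rw [if_neg hw]
          obtain ⟨i, hi⟩ : ∃ i, w i ≠ 0 := by
            by_contra hc; push_neg at hc; exact hw (funext hc)
          refine Finset.prod_eq_zero (Finset.mem_univ i) ?_
          rcases zmod2_cases (w i) with h0 | h1
          · exact absurd h0 hi
          · rw [h1]; simp

lemma card_filter_val_lt {h m : ℕ} (hm : m ≤ h) :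
    (Finset.univ.filter (fun i : Fin h => (i : ℕ) < m)).card = m := by
  have : (Finset.univ.filter (fun i : Fin h => (i : ℕ) < m)).card = (Finset.range m).card := by
    refine Finset.card_bij (fun a _ => (a : ℕ)) ?_ ?_ ?_
    · intro a ha; rw [Finset.mem_filter] at ha; exact Finset.mem_range.mpr ha.2
    · intro a _ b _ hab; exact Fin.ext hab
    · intro b hb
      rw [Finset.mem_range] at hb
      exact ⟨⟨b, lt_of_lt_of_le hb hm⟩, Finset.mem_filter.mpr ⟨Finset.mem_univ _, hb⟩, rfl⟩
  rw [this, Finset.card_range]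

lemma prefixWeight_le (h : ℕ) (B : Fin h → ZMod 2) : prefixWeight h B ≤ h - 1 := by
  unfold prefixWeight
  calc (Finset.univ.filter (fun i : Fin h => (i : ℕ) < h - 1 ∧ B i = 1)).card
      ≤ (Finset.univ.filter (fun i : Fin h => (i : ℕ) < h - 1)).card := by
        refine Finset.card_le_card fun i hi => ?_
        rw [Finset.mem_filter] at hi ⊢
        exact ⟨hi.1, hi.2.1⟩
    _ = h - 1 := card_filter_val_lt (Nat.sub_le h 1)

/- ### The signed measure and its Fourier coefficients -/

noncomputable def phiF (h : ℕ) (β f : ℕ × ZMod 2 → ℝ) (α : ℝ) (B : Fin h → ZMod 2) : ℝ :=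
  β (prefixWeight h B, lastCoord h B) * (f (prefixWeight h B, lastCoord h B) - α) /
    ((h - 1).choose (prefixWeight h B) : ℝ)

noncomputable def FC (h : ℕ) (β f : ℕ × ZMod 2 → ℝ) (α : ℝ) (z : Fin h → ZMod 2) : ℝ :=
  ∑ B : Fin h → ZMod 2, phiF h β f α B * chi (dotZ z B)

def zc (h m : ℕ) (r : ZMod 2) : Fin h → ZMod 2 :=
  fun i => (if (i : ℕ) < m then 1 else 0) + (if (i : ℕ) = h - 1 then r else 0)

lemma dot_zc (h : ℕ) (hh : 0 < h) (m : ℕ) (r : ZMod 2) (B : Fin h → ZMod 2) :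
    dotZ (zc h m r) B = (∑ i : Fin h, if (i : ℕ) < m then B i else 0) + r * lastCoord h B := by
  have hN : h - 1 < h := Nat.sub_lt hh one_pos
  unfold dotZ zc lastCoord
  rw [dif_pos hN]
  calc ∑ i : Fin h, ((if (i : ℕ) < m then (1 : ZMod 2) else 0) +
          if (i : ℕ) = h - 1 then r else 0) * B i
      = ∑ i : Fin h, ((if (i : ℕ) < m then B i else 0) +
          (if i = (⟨h - 1, hN⟩ : Fin h) then r * B i else 0)) := by
        refine Finset.sum_congr rfl fun i _ => ?_
        rw [add_mul]
        congr 1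
        · split <;> simp
        · have : ((i : ℕ) = h - 1) ↔ (i = (⟨h - 1, hN⟩ : Fin h)) := by
            rw [Fin.ext_iff]
          split_ifs with h1 h2 h2
          · rfl
          · exact absurd (this.mp h1) h2
          · exact absurd (this.mpr h2) h1
          · rw [zero_mul]
    _ = (∑ i : Fin h, if (i : ℕ) < m then B i else 0) +
          ∑ i : Fin h, (if i = (⟨h - 1, hN⟩ : Fin h) then r * B i else 0) :=
        Finset.sum_add_distrib
    _ = _ := by
        rw [Finset.sum_ite_eq' Finset.univ (⟨h - 1, hN⟩ : Fin h) (fun i => r * B i),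
          if_pos (Finset.mem_univ _)]

lemma berZ_sum (p : ℝ) (x : ZMod 2) :
    ∑ F : ZMod 2, berZ p F * (if x + F = 0 then (1 : ℝ) else 0)
      = 1 / 2 + chi x * (1 - 2 * p) / 2 := by
  rw [sum_zmod2]
  rcases zmod2_cases x with rfl | rfl <;> simp [berZ, chi, if_pos (show (1 + 1 : ZMod 2) = 0 by decide)] <;> ring

lemma parityProb_eq (h : ℕ) (hh : 0 < h) (β f : ℕ × ZMod 2 → ℝ) (m : ℕ) (r : ZMod 2) :
    parityProb h β f m r = ∑ B : Fin h → ZMod 2,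
      β (prefixWeight h B, lastCoord h B) / ((h - 1).choose (prefixWeight h B) : ℝ) *
        (1 / 2 + chi (dotZ (zc h m r) B) *
          (1 - 2 * f (prefixWeight h B, lastCoord h B)) / 2) := by
  unfold parityProb muDensity
  refine Finset.sum_congr rfl fun B _ => ?_
  rw [Finset.sum_congr rfl fun F (_ : F ∈ Finset.univ) => mul_assoc
    (β (prefixWeight h B, lastCoord h B) / ((h - 1).choose (prefixWeight h B) : ℝ))
    (berZ (f (prefixWeight h B, lastCoord h B)) F) _, ← Finset.mul_sum, berZ_sum,
    dot_zc h hh]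

lemma FC_eq_diff (h : ℕ) (hh : 0 < h) (β f : ℕ × ZMod 2 → ℝ) (α : ℝ) (m : ℕ) (r : ZMod 2) :
    FC h β f α (zc h m r) =
      parityProb h β (fun _ => α) m r - parityProb h β f m r := by
  rw [parityProb_eq h hh β f m r, parityProb_eq h hh β (fun _ => α) m r,
    ← Finset.sum_sub_distrib]
  unfold FC phiF
  refine Finset.sum_congr rfl fun B _ => ?_
  ring

/- ### Permutation invariance -/

lemma phiF_comp (h : ℕ) (hh : 0 < h) (β f : ℕ × ZMod 2 → ℝ) (α : ℝ)
    (σ : Equiv.Perm (Fin h))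
    (hσ : σ ⟨h - 1, Nat.sub_lt hh one_pos⟩ = ⟨h - 1, Nat.sub_lt hh one_pos⟩)
    (B : Fin h → ZMod 2) :
    phiF h β f α (B ∘ σ) = phiF h β f α B := by
  have hN : h - 1 < h := Nat.sub_lt hh one_pos
  have hlast : lastCoord h (B ∘ σ) = lastCoord h B := by
    unfold lastCoord
    rw [dif_pos hN, dif_pos hN]
    show B (σ ⟨h - 1, hN⟩) = B ⟨h - 1, hN⟩
    rw [hσ]
  have hpw : prefixWeight h (B ∘ σ) = prefixWeight h B := by
    unfold prefixWeight
    refine Finset.card_bij (fun a _ => σ a) ?_ ?_ ?_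
    · intro a ha
      rw [Finset.mem_filter] at ha ⊢
      obtain ⟨-, halt, haB⟩ := ha
      have hane : σ a ≠ ⟨h - 1, hN⟩ := by
        intro hc
        have : a = ⟨h - 1, hN⟩ := σ.injective (hc.trans hσ.symm)
        rw [this] at halt
        simp at halt
      have h1 : (σ a : ℕ) < h := (σ a).isLt
      have h2 : (σ a : ℕ) ≠ h - 1 := fun hc => hane (Fin.ext hc)
      exact ⟨Finset.mem_univ _, (by omega : (σ a : ℕ) < h - 1), haB⟩
    · intro a _ b _ hab; exact σ.injective hab
    · intro c hc
      rw [Finset.mem_filter] at hc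
      obtain ⟨-, hclt, hcB⟩ := hc
      refine ⟨σ.symm c, ?_, σ.apply_symm_apply c⟩
      rw [Finset.mem_filter]
      have hcne : σ.symm c ≠ ⟨h - 1, hN⟩ := by
        intro hcc
        have : c = ⟨h - 1, hN⟩ := by
          have := congrArg σ hcc
          rwa [σ.apply_symm_apply, hσ] at this
        rw [this] at hclt
        simp at hclt
      have h1 : (σ.symm c : ℕ) < h := (σ.symm c).isLt
      have h2 : (σ.symm c : ℕ) ≠ h - 1 := fun hc2 => hcne (Fin.ext hc2)
      refine ⟨Finset.mem_univ _, by omega, ?_⟩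
      show B (σ (σ.symm c)) = 1
      rwa [σ.apply_symm_apply]
  unfold phiF
  rw [hlast, hpw]

lemma FC_comp (h : ℕ) (hh : 0 < h) (β f : ℕ × ZMod 2 → ℝ) (α : ℝ)
    (σ : Equiv.Perm (Fin h))
    (hσ : σ ⟨h - 1, Nat.sub_lt hh one_pos⟩ = ⟨h - 1, Nat.sub_lt hh one_pos⟩)
    (z : Fin h → ZMod 2) :
    FC h β f α (z ∘ σ) = FC h β f α z := by
  have hσ' : σ.symm ⟨h - 1, Nat.sub_lt hh one_pos⟩ = ⟨h - 1, Nat.sub_lt hh one_pos⟩ := by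
    conv_lhs => rw [← hσ]
    exact σ.symm_apply_apply _
  unfold FC
  refine Fintype.sum_equiv (Equiv.arrowCongr σ (Equiv.refl (ZMod 2))) _ _ fun B => ?_
  have he : (Equiv.arrowCongr σ (Equiv.refl (ZMod 2))) B = B ∘ σ.symm := rfl
  rw [he, phiF_comp h hh β f α σ.symm hσ' B]
  congr 2
  calc dotZ (z ∘ σ) B
      = ∑ i : Fin h, z (σ i) * B (σ.symm (σ i)) := by
        unfold dotZ
        refine Finset.sum_congr rfl fun i _ => ?_
        rw [σ.symm_apply_apply]
        rfl
    _ = ∑ i : Fin h, z i * B (σ.symm i) :=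
        Equiv.sum_comp σ (fun i => z i * B (σ.symm i))
    _ = dotZ z (B ∘ σ.symm) := rfl

lemma exists_perm (h : ℕ) (hh : 0 < h) (z : Fin h → ZMod 2) :
    ∃ σ : Equiv.Perm (Fin h),
      σ ⟨h - 1, Nat.sub_lt hh one_pos⟩ = ⟨h - 1, Nat.sub_lt hh one_pos⟩ ∧
      z ∘ σ = zc h (prefixWeight h z) (lastCoord h z) := by
  classical
  have hN : h - 1 < h := Nat.sub_lt hh one_pos
  have hmle : prefixWeight h z ≤ h - 1 := prefixWeight_le h z
  have hcard : Fintype.card {x : Fin h // (x : ℕ) < prefixWeight h z}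
      = Fintype.card {x : Fin h // (x : ℕ) < h - 1 ∧ z x = 1} := by
    rw [Fintype.card_subtype, Fintype.card_subtype,
      card_filter_val_lt (show prefixWeight h z ≤ h from by omega)]
    rfl
  set e := Fintype.equivOfCardEq hcard with he
  set σ₁ : Equiv.Perm (Fin h) := e.extendSubtype with hσ₁
  set k₀ : Fin h := σ₁.symm ⟨h - 1, hN⟩ with hk₀
  set σ : Equiv.Perm (Fin h) := σ₁ * Equiv.swap ⟨h - 1, hN⟩ k₀ with hσdef
  have hqN : ¬ (((⟨h - 1, hN⟩ : Fin h) : ℕ) < h - 1 ∧ z ⟨h - 1, hN⟩ = 1) := by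
    intro hc
    have := hc.1
    simp at this
  have hpN : ¬ (((⟨h - 1, hN⟩ : Fin h) : ℕ) < prefixWeight h z) := by
    simp only [Fin.val_mk]
    omega
  have hpk : ¬ ((k₀ : ℕ) < prefixWeight h z) := by
    intro hc
    have hmem := e.extendSubtype_mem k₀ hc
    rw [show e.extendSubtype k₀ = ⟨h - 1, hN⟩ from σ₁.apply_symm_apply _] at hmem
    exact hqN hmem
  have hσN : σ ⟨h - 1, hN⟩ = ⟨h - 1, hN⟩ := by
    show σ₁ (Equiv.swap (⟨h - 1, hN⟩ : Fin h) k₀ ⟨h - 1, hN⟩) = ⟨h - 1, hN⟩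
    rw [Equiv.swap_apply_left]
    exact σ₁.apply_symm_apply _
  refine ⟨σ, hσN, ?_⟩
  funext i
  show z (σ i) = zc h (prefixWeight h z) (lastCoord h z) i
  by_cases hpi : (i : ℕ) < prefixWeight h z
  · have hiN : i ≠ ⟨h - 1, hN⟩ := fun hc => hpN (hc ▸ hpi)
    have hik : i ≠ k₀ := fun hc => hpk (hc ▸ hpi)
    have hswap : Equiv.swap (⟨h - 1, hN⟩ : Fin h) k₀ i = i :=
      Equiv.swap_apply_of_ne_of_ne hiN hik
    have hstep : σ i = σ₁ i := by
      show σ₁ (Equiv.swap (⟨h - 1, hN⟩ : Fin h) k₀ i) = σ₁ i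
      rw [hswap]
    have hq := e.extendSubtype_mem i hpi
    rw [hstep, hq.2]
    have hne : ¬ ((i : ℕ) = h - 1) := by omega
    simp [zc, hpi, hne]
  · by_cases hiN : i = ⟨h - 1, hN⟩
    · rw [hiN, hσN]
      have hlc : lastCoord h z = z ⟨h - 1, hN⟩ := by unfold lastCoord; rw [dif_pos hN]
      simp only [zc, Fin.val_mk]
      rw [if_neg (by omega), if_pos trivial, zero_add, hlc]
    · have key : ¬ ((σ i : ℕ) < h - 1 ∧ z (σ i) = 1) := by
        rcases eq_or_ne i k₀ with hik | hik
        · show ¬ _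
          rw [show σ i = σ₁ (Equiv.swap (⟨h - 1, hN⟩ : Fin h) k₀ i) from rfl, hik,
            Equiv.swap_apply_right]
          exact e.extendSubtype_not_mem ⟨h - 1, hN⟩ hpN
        · rw [show σ i = σ₁ (Equiv.swap (⟨h - 1, hN⟩ : Fin h) k₀ i) from rfl,
            Equiv.swap_apply_of_ne_of_ne hiN hik]
          exact e.extendSubtype_not_mem i hpi
      have hσiN : σ i ≠ ⟨h - 1, hN⟩ := fun hc => hiN (σ.injective (hc.trans hσN.symm))
      have h1 : (σ i : ℕ) < h := (σ i).isLt
      have h2 : (σ i : ℕ) ≠ h - 1 := fun hc => hσiN (Fin.ext hc)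
      have hlt : (σ i : ℕ) < h - 1 := by omega
      have hz0 : z (σ i) = 0 := by
        rcases zmod2_cases (z (σ i)) with h0 | hone
        · exact h0
        · exact absurd ⟨hlt, hone⟩ key
      have hne : ¬ ((i : ℕ) = h - 1) := fun hc => hiN (Fin.ext hc)
      rw [hz0]
      simp [zc, hpi, hne]

/- ### Counting the fibers -/

lemma fiber_card (h : ℕ) (hh : 0 < h) (k : ℕ) (hk : k ≤ h - 1) (b : ZMod 2) :
    (Finset.univ.filter fun B : Fin h → ZMod 2 =>
        prefixWeight h B = k ∧ lastCoord h B = b).card = (h - 1).choose k := by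
  classical
  have hN : h - 1 < h := Nat.sub_lt hh one_pos
  have hPcard : (Finset.univ.filter (fun i : Fin h => (i : ℕ) < h - 1)).card = h - 1 :=
    card_filter_val_lt (Nat.sub_le h 1)
  have key : ∀ A ∈ (Finset.univ.filter (fun i : Fin h => (i : ℕ) < h - 1)).powersetCard k,
      Finset.univ.filter (fun i : Fin h => (i : ℕ) < h - 1 ∧
        (if i ∈ A then (1 : ZMod 2) else if (i : ℕ) = h - 1 then b else 0) = 1) = A := by
    intro A hA
    obtain ⟨hsub, hcard⟩ := Finset.mem_powersetCard.mp hA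
    have hAP : ∀ i ∈ A, (i : ℕ) < h - 1 := fun i hi => (Finset.mem_filter.mp (hsub hi)).2
    ext i
    simp only [Finset.mem_filter, Finset.mem_univ, true_and]
    constructor
    · rintro ⟨hlt, hval⟩
      by_contra hiA
      rw [if_neg hiA, if_neg (by omega)] at hval
      exact absurd hval (by decide)
    · intro hiA
      exact ⟨hAP i hiA, by rw [if_pos hiA]⟩
  have hmain : (Finset.univ.filter fun B : Fin h → ZMod 2 =>
      prefixWeight h B = k ∧ lastCoord h B = b).card
      = ((Finset.univ.filter (fun i : Fin h => (i : ℕ) < h - 1)).powersetCard k).card := by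
    refine Finset.card_bij'
      (fun B _ => Finset.univ.filter (fun i : Fin h => (i : ℕ) < h - 1 ∧ B i = 1))
      (fun A _ => fun i : Fin h => if i ∈ A then (1 : ZMod 2)
        else if (i : ℕ) = h - 1 then b else 0) ?_ ?_ ?_ ?_
    · intro B hB
      rw [Finset.mem_powersetCard]
      constructor
      · intro i hi
        rw [Finset.mem_filter] at hi ⊢
        exact ⟨hi.1, hi.2.1⟩
      · exact (Finset.mem_filter.mp hB).2.1
    · intro A hA
      refine Finset.mem_filter.mpr ⟨Finset.mem_univ _, ?_, ?_⟩
      · show (Finset.univ.filter (fun i : Fin h => (i : ℕ) < h - 1 ∧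
          (if i ∈ A then (1 : ZMod 2) else if (i : ℕ) = h - 1 then b else 0) = 1)).card = k
        rw [key A hA]
        exact (Finset.mem_powersetCard.mp hA).2
      · show lastCoord h _ = b
        unfold lastCoord
        rw [dif_pos hN]
        have hnot : (⟨h - 1, hN⟩ : Fin h) ∉ A := by
          intro hc
          obtain ⟨hsub, -⟩ := Finset.mem_powersetCard.mp hA
          have := (Finset.mem_filter.mp (hsub hc)).2
          simp at this
        show (if (⟨h - 1, hN⟩ : Fin h) ∈ A then (1 : ZMod 2)
          else if ((⟨h - 1, hN⟩ : Fin h) : ℕ) = h - 1 then b else 0) = b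
        rw [if_neg hnot, if_pos rfl]
    · intro B hB
      obtain ⟨-, hpw, hlast⟩ := Finset.mem_filter.mp hB
      funext i
      show (if i ∈ Finset.univ.filter (fun j : Fin h => (j : ℕ) < h - 1 ∧ B j = 1)
        then (1 : ZMod 2) else if (i : ℕ) = h - 1 then b else 0) = B i
      by_cases hlt : (i : ℕ) < h - 1
      · by_cases hBi : B i = 1
        · rw [if_pos (Finset.mem_filter.mpr ⟨Finset.mem_univ _, hlt, hBi⟩), hBi]
        · have hB0 : B i = 0 := (zmod2_cases _).resolve_right hBi
          rw [if_neg (fun hc => hBi (Finset.mem_filter.mp hc).2.2), if_neg (by omega), hB0]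
      · have hieq : (i : ℕ) = h - 1 := by have := i.isLt; omega
        have hnot : i ∉ Finset.univ.filter (fun j : Fin h => (j : ℕ) < h - 1 ∧ B j = 1) :=
          fun hc => hlt (Finset.mem_filter.mp hc).2.1
        rw [if_neg hnot, if_pos hieq]
        have hieq' : i = ⟨h - 1, hN⟩ := Fin.ext hieq
        unfold lastCoord at hlast
        rw [dif_pos hN] at hlast
        rw [hieq', hlast]
    · intro A hA
      exact key A hA
  rw [hmain, Finset.card_powersetCard, hPcard]

lemma sum_phiF (h : ℕ) (hh : 0 < h) (β f : ℕ × ZMod 2 → ℝ) (α : ℝ) :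
    ∑ B : Fin h → ZMod 2, phiF h β f α B
      = ∑ k ∈ Finset.range h, ∑ b : ZMod 2, β (k, b) * (f (k, b) - α) := by
  classical
  have hmaps : ∀ B ∈ (Finset.univ : Finset (Fin h → ZMod 2)),
      (prefixWeight h B, lastCoord h B) ∈ (Finset.range h) ×ˢ (Finset.univ : Finset (ZMod 2)) := by
    intro B _
    refine Finset.mem_product.mpr ⟨Finset.mem_range.mpr ?_, Finset.mem_univ _⟩
    have := prefixWeight_le h B
    omega
  rw [← Finset.sum_fiberwise_of_maps_to hmaps (phiF h β f α), Finset.sum_product]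
  refine Finset.sum_congr rfl fun k hk => Finset.sum_congr rfl fun b _ => ?_
  have hk' : k ≤ h - 1 := by
    rw [Finset.mem_range] at hk
    omega
  have hC : ((h - 1).choose k : ℝ) ≠ 0 :=
    Nat.cast_ne_zero.mpr (Nat.choose_pos hk').ne'
  have hfilter : (Finset.univ.filter
        (fun B : Fin h → ZMod 2 => (prefixWeight h B, lastCoord h B) = (k, b)))
      = Finset.univ.filter
        (fun B : Fin h → ZMod 2 => prefixWeight h B = k ∧ lastCoord h B = b) := by
    apply Finset.filter_congr
    intro B _
    rw [Prod.ext_iff]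
  rw [hfilter]
  have hconst : ∀ B ∈ Finset.univ.filter
      (fun B : Fin h → ZMod 2 => prefixWeight h B = k ∧ lastCoord h B = b),
      phiF h β f α B = β (k, b) * (f (k, b) - α) / ((h - 1).choose k : ℝ) := by
    intro B hB
    obtain ⟨-, h1, h2⟩ := Finset.mem_filter.mp hB
    unfold phiF
    rw [h1, h2]
  rw [Finset.sum_congr rfl hconst, Finset.sum_const, fiber_card h hh k hk' b,
    nsmul_eq_mul, mul_comm, div_mul_cancel₀ _ hC]

/- ### Fourier inversion bound -/

lemma phiF_inversion (h : ℕ) (β f : ℕ × ZMod 2 → ℝ) (α : ℝ) (B : Fin h → ZMod 2) :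
    (2 : ℝ) ^ h * phiF h β f α B = ∑ z : Fin h → ZMod 2, FC h β f α z * chi (dotZ z B) := by
  classical
  unfold FC
  have e1 : ∀ z : Fin h → ZMod 2,
      (∑ B' : Fin h → ZMod 2, phiF h β f α B' * chi (dotZ z B')) * chi (dotZ z B)
      = ∑ B' : Fin h → ZMod 2, phiF h β f α B' * chi (dotZ z (B' + B)) := by
    intro z
    rw [Finset.sum_mul]
    refine Finset.sum_congr rfl fun B' _ => ?_
    rw [← dotZ_add z B' B, chi_add]
    ring
  rw [Finset.sum_congr rfl fun z _ => e1 z, Finset.sum_comm]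
  have e2 : ∀ B' : Fin h → ZMod 2,
      ∑ z : Fin h → ZMod 2, phiF h β f α B' * chi (dotZ z (B' + B))
      = phiF h β f α B' * (if B' + B = 0 then (2 : ℝ) ^ h else 0) := by
    intro B'
    rw [← Finset.mul_sum, sum_chi_dot]
  rw [Finset.sum_congr rfl fun B' _ => e2 B']
  have e3 : ∀ B' : Fin h → ZMod 2, (B' + B = 0) ↔ (B' = B) := by
    intro B'
    constructor
    · intro hB'
      funext i
      have := congrFun hB' i
      exact (zmod2_add_eq_zero (B' i) (B i)).mp this
    · rintro rfl
      funext i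
      exact (zmod2_add_eq_zero _ _).mpr rfl
  have e4 : ∀ B' : Fin h → ZMod 2,
      phiF h β f α B' * (if B' + B = 0 then (2 : ℝ) ^ h else 0)
      = if B' = B then phiF h β f α B' * (2 : ℝ) ^ h else 0 := by
    intro B'
    rw [if_congr (e3 B') rfl rfl, mul_ite, mul_zero]
  rw [Finset.sum_congr rfl fun B' _ => e4 B',
    Finset.sum_ite_eq' Finset.univ B (fun B' => phiF h β f α B' * (2 : ℝ) ^ h),
    if_pos (Finset.mem_univ _), mul_comm]

lemma phiF_bound (h : ℕ) (β f : ℕ × ZMod 2 → ℝ) (α : ℝ) (ε : ℝ)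
    (hFC : ∀ z : Fin h → ZMod 2, |FC h β f α z| ≤ 2 * ε) (B : Fin h → ZMod 2) :
    |phiF h β f α B| ≤ 2 * ε := by
  classical
  have h2pos : (0 : ℝ) < 2 ^ h := by positivity
  have hkey := phiF_inversion h β f α B
  have hbound : |∑ z : Fin h → ZMod 2, FC h β f α z * chi (dotZ z B)| ≤ 2 ^ h * (2 * ε) := by
    calc |∑ z : Fin h → ZMod 2, FC h β f α z * chi (dotZ z B)|
        ≤ ∑ z : Fin h → ZMod 2, |FC h β f α z * chi (dotZ z B)| :=
          Finset.abs_sum_le_sum_abs _ _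
      _ ≤ ∑ _z : Fin h → ZMod 2, 2 * ε := by
          refine Finset.sum_le_sum fun z _ => ?_
          rw [abs_mul]
          rcases zmod2_cases (dotZ z B) with h0 | h1
          · rw [h0]; simpa using hFC z
          · rw [h1]; simpa using hFC z
      _ = 2 ^ h * (2 * ε) := by
          rw [Finset.sum_const, Finset.card_univ, nsmul_eq_mul]
          congr 1
          rw [Fintype.card_fun]
          simp
  rw [← hkey, abs_mul, abs_of_pos h2pos] at hbound
  calc |phiF h β f α B| = 2 ^ h * |phiF h β f α B| / 2 ^ h := by field_simp
    _ ≤ 2 ^ h * (2 * ε) / 2 ^ h := by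
        gcongr
    _ = 2 * ε := by field_simp


/-- Let `β` be a probability distribution over states
`S[h] = {0,...,h-1} × 𝔽₂` and `f : S[h] → [0,1]`, and set `α := Σ_s β(s) f(s)`.
If for all `1 ≤ m < h` the parities `B₁+⋯+B_m+F` are `ε`-unbiased under both `μ_{β,f}` and
`μ_{β,α}`, and for all `0 ≤ m < h` the parities `B₁+⋯+B_m+B_h+F` are `ε`-unbiased under
both `μ_{β,f}` and `μ_{β,α}`, then `Σ_s β(s)|f(s) - α| ≤ 4√2·(2h)^{3(h+1)²}·ε`. -/
theorem label_correlation (h : ℕ) (hh : 0 < h) (ε : ℝ) (hε : 0 < ε)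
    (β f : ℕ × ZMod 2 → ℝ)
    (hβ0 : ∀ s, 0 ≤ β s)
    (hβ1 : ∑ k ∈ Finset.range h, ∑ b : ZMod 2, β (k, b) = 1)
    (hf : ∀ s, f s ∈ Set.Icc (0 : ℝ) 1)
    (α : ℝ) (hα : α = ∑ k ∈ Finset.range h, ∑ b : ZMod 2, β (k, b) * f (k, b))
    (h1 : ∀ m : ℕ, 1 ≤ m → m < h →
      |parityProb h β f m 0 - 1 / 2| ≤ ε ∧
      |parityProb h β (fun _ => α) m 0 - 1 / 2| ≤ ε)
    (h2 : ∀ m : ℕ, m < h →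
      |parityProb h β f m 1 - 1 / 2| ≤ ε ∧
      |parityProb h β (fun _ => α) m 1 - 1 / 2| ≤ ε) :
    ∑ k ∈ Finset.range h, ∑ b : ZMod 2, β (k, b) * |f (k, b) - α|
      ≤ (4 * Real.sqrt 2 * ((2 * h : ℕ) : ℝ) ^ (3 * (h + 1) ^ 2)) * ε := by
  classical
  have hFC0 : FC h β f α (zc h 0 0) = 0 := by
    have hzc : zc h 0 0 = 0 := by
      funext i
      simp [zc]
    have hdot : ∀ B : Fin h → ZMod 2, dotZ (0 : Fin h → ZMod 2) B = 0 := by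
      intro B; simp [dotZ]
    have hFCsum : FC h β f α (zc h 0 0) = ∑ B : Fin h → ZMod 2, phiF h β f α B := by
      rw [hzc]
      unfold FC
      refine Finset.sum_congr rfl fun B _ => ?_
      rw [hdot B, chi_zero, mul_one]
    rw [hFCsum, sum_phiF h hh β f α]
    have e5 : ∀ k ∈ Finset.range h, ∑ b : ZMod 2, β (k, b) * (f (k, b) - α)
        = (∑ b : ZMod 2, β (k, b) * f (k, b)) - (∑ b : ZMod 2, β (k, b)) * α := by
      intro k _
      rw [Finset.sum_mul, ← Finset.sum_sub_distrib]
      exact Finset.sum_congr rfl fun b _ => by ring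
    rw [Finset.sum_congr rfl e5, Finset.sum_sub_distrib, ← hα, ← Finset.sum_mul, hβ1]
    ring
  have hFCb : ∀ z : Fin h → ZMod 2, |FC h β f α z| ≤ 2 * ε := by
    intro z
    obtain ⟨σ, hσN, hσz⟩ := exists_perm h hh z
    rw [← FC_comp h hh β f α σ hσN z, hσz]
    have hmle : prefixWeight h z ≤ h - 1 := prefixWeight_le h z
    have hmh : prefixWeight h z < h := by omega
    rcases zmod2_cases (lastCoord h z) with hr | hr <;> rw [hr]
    · rcases Nat.eq_zero_or_pos (prefixWeight h z) with hm0 | hm0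
      · rw [hm0, hFC0, abs_zero]
        linarith
      · obtain ⟨ha, hb⟩ := h1 (prefixWeight h z) hm0 hmh
        rw [FC_eq_diff h hh β f α _ 0]
        have ha' := abs_le.mp ha
        have hb' := abs_le.mp hb
        apply abs_le.mpr
        constructor <;> linarith [ha'.1, ha'.2, hb'.1, hb'.2]
    · obtain ⟨ha, hb⟩ := h2 (prefixWeight h z) hmh
      rw [FC_eq_diff h hh β f α _ 1]
      have ha' := abs_le.mp ha
      have hb' := abs_le.mp hb
      apply abs_le.mpr
      constructor <;> linarith [ha'.1, ha'.2, hb'.1, hb'.2]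
  have state_bound : ∀ k ∈ Finset.range h, ∀ b : ZMod 2,
      β (k, b) * |f (k, b) - α| ≤ 2 ^ h * ε := by
    intro k hk b
    have hk' : k ≤ h - 1 := by
      rw [Finset.mem_range] at hk
      omega
    obtain ⟨B₀, hB₀⟩ : ∃ B : Fin h → ZMod 2, prefixWeight h B = k ∧ lastCoord h B = b := by
      have hpos : 0 < (Finset.univ.filter fun B : Fin h → ZMod 2 =>
          prefixWeight h B = k ∧ lastCoord h B = b).card := by
        rw [fiber_card h hh k hk' b]
        exact Nat.choose_pos hk'
      obtain ⟨B, hB⟩ := Finset.card_pos.mp hpos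
      exact ⟨B, (Finset.mem_filter.mp hB).2⟩
    have hphi := phiF_bound h β f α ε hFCb B₀
    have hCpos : (0 : ℝ) < ((h - 1).choose k : ℝ) := by
      exact_mod_cast Nat.choose_pos hk'
    have hval : phiF h β f α B₀ = β (k, b) * (f (k, b) - α) / ((h - 1).choose k : ℝ) := by
      unfold phiF
      rw [hB₀.1, hB₀.2]
    have hCle : ((h - 1).choose k : ℝ) ≤ 2 ^ (h - 1) := by
      have hCn : (h - 1).choose k ≤ 2 ^ (h - 1) := by
        calc (h - 1).choose k ≤ ∑ m ∈ Finset.range (h - 1 + 1), (h - 1).choose m :=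
              Finset.single_le_sum (f := fun m => (h - 1).choose m)
                (fun _ _ => Nat.zero_le _) (Finset.mem_range.mpr (by omega))
          _ = 2 ^ (h - 1) := Nat.sum_range_choose (h - 1)
      exact_mod_cast hCn
    have habs : β (k, b) * |f (k, b) - α|
        = ((h - 1).choose k : ℝ) * |phiF h β f α B₀| := by
      rw [hval, abs_div, abs_of_pos hCpos, abs_mul, abs_of_nonneg (hβ0 (k, b))]
      field_simp
    rw [habs]
    calc ((h - 1).choose k : ℝ) * |phiF h β f α B₀| ≤ 2 ^ (h - 1) * (2 * ε) :=
          mul_le_mul hCle hphi (abs_nonneg _) (by positivity)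
      _ = 2 ^ (h - 1) * 2 * ε := by ring
      _ = 2 ^ h * ε := by
          rw [← pow_succ]
          congr 2
          omega
  have total : ∑ k ∈ Finset.range h, ∑ b : ZMod 2, β (k, b) * |f (k, b) - α|
      ≤ (h : ℝ) * (2 ^ h * ε) * 2 := by
    calc ∑ k ∈ Finset.range h, ∑ b : ZMod 2, β (k, b) * |f (k, b) - α|
        ≤ ∑ _k ∈ Finset.range h, ∑ _b : ZMod 2, (2 : ℝ) ^ h * ε :=
          Finset.sum_le_sum fun k hk => Finset.sum_le_sum fun b _ => state_bound k hk b
      _ = (h : ℝ) * (2 ^ h * ε) * 2 := by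
          rw [Finset.sum_congr rfl fun k (_ : k ∈ Finset.range h) =>
            sum_zmod2 (fun _ => (2 : ℝ) ^ h * ε)]
          rw [Finset.sum_const, Finset.card_range, nsmul_eq_mul]
          ring
  refine le_trans total ?_
  have hnat : h * 2 ^ (h + 1) ≤ (2 * h) ^ (3 * (h + 1) ^ 2) := by
    calc h * 2 ^ (h + 1) ≤ (2 * h) * (2 * h) ^ (h + 1) :=
          Nat.mul_le_mul (by omega) (Nat.pow_le_pow_left (by omega) _)
      _ = (2 * h) ^ (h + 2) := by rw [← pow_succ']
      _ ≤ (2 * h) ^ (3 * (h + 1) ^ 2) := Nat.pow_le_pow_right (by omega) (by nlinarith)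
  have hX : (h : ℝ) * 2 ^ (h + 1) ≤ ((2 * h : ℕ) : ℝ) ^ (3 * (h + 1) ^ 2) := by
    exact_mod_cast hnat
  have hXnn : (0 : ℝ) ≤ ((2 * h : ℕ) : ℝ) ^ (3 * (h + 1) ^ 2) := by positivity
  have hsqrt : (1 : ℝ) ≤ Real.sqrt 2 := by
    have := Real.sqrt_le_sqrt (show (1 : ℝ) ≤ 2 by norm_num)
    simpa using this
  have hstep : ((2 * h : ℕ) : ℝ) ^ (3 * (h + 1) ^ 2) * ε
      ≤ Real.sqrt 2 * (((2 * h : ℕ) : ℝ) ^ (3 * (h + 1) ^ 2) * ε) :=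
    le_mul_of_one_le_left (mul_nonneg hXnn hε.le) hsqrt
  calc (h : ℝ) * (2 ^ h * ε) * 2 = ((h : ℝ) * 2 ^ (h + 1)) * ε := by ring
    _ ≤ ((2 * h : ℕ) : ℝ) ^ (3 * (h + 1) ^ 2) * ε :=
        mul_le_mul_of_nonneg_right hX hε.le
    _ ≤ (4 * Real.sqrt 2 * ((2 * h : ℕ) : ℝ) ^ (3 * (h + 1) ^ 2)) * ε := by
        nlinarith [mul_nonneg hXnn hε.le]
end
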